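/- (Abduction soundness) Let φ, e, Ψ be predicates on valuations such that φ ∧ e entails Ψ. Suppose φ decomposes as φ_v ∧ φ_w̄ and Ψ decomposes as Ψ_v ∧ Ψ_w̄, where φ_v, e, Ψ_v depend only on a variable set W, and φ_w̄, Ψ_w̄ depend only on the complement of W, and suppose φ_w̄ is satisfiable. Then the abduct φ_v ∧ Ψ_w̄ satisfies: φ ∧ e entails (φ_v ∧ Ψ_w̄) ∧ e, and (φ_v ∧ Ψ_w̄) ∧ e entails Ψ. -/
import Mathlib


/-- P depends only on the variables in W. -/
def DependsOnly {Var Val : Type*} (P : (Var → Val) → Prop) (W : Set Var) : Prop :=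
  ∀ θ θ' : Var → Val, (∀ x ∈ W, θ x = θ' x) → (P θ ↔ P θ')

/-- Abduction soundness. -/
theorem abduction_sound {Var Val : Type*} [Nonempty Val]
    (φ e Ψ φv φw Ψv Ψw : (Var → Val) → Prop) (W : Set Var)
    (hφ : ∀ θ, φ θ ↔ (φv θ ∧ φw θ))
    (hΨ : ∀ θ, Ψ θ ↔ (Ψv θ ∧ Ψw θ))
    (hφv : DependsOnly φv W) (he : DependsOnly e W) (hΨv : DependsOnly Ψv W)
    (hφw : DependsOnly φw Wᶜ) (hΨw : DependsOnly Ψw Wᶜ)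
    (hsat : ∃ θ, φw θ)
    (hent : ∀ θ, (φ θ ∧ e θ) → Ψ θ) :
    (∀ θ, (φ θ ∧ e θ) → ((φv θ ∧ Ψw θ) ∧ e θ)) ∧
    (∀ θ, ((φv θ ∧ Ψw θ) ∧ e θ) → Ψ θ) := by
  classical
  constructor
  · rintro θ ⟨hφθ, heθ⟩
    have h := hent θ ⟨hφθ, heθ⟩
    exact ⟨⟨((hφ θ).mp hφθ).1, ((hΨ θ).mp h).2⟩, heθ⟩
  · rintro θ ⟨⟨hφvθ, hΨwθ⟩, heθ⟩
    obtain ⟨θ₀, hθ₀⟩ := hsat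
    set θ' : Var → Val := fun x => if x ∈ W then θ x else θ₀ x with hθ'
    have hW : ∀ x ∈ W, θ x = θ' x := fun x hx => (if_pos hx).symm
    have hWc : ∀ x ∈ Wᶜ, θ₀ x = θ' x := fun x hx => (if_neg hx).symm
    have hΨ' := hent θ' ⟨(hφ θ').mpr ⟨(hφv θ θ' hW).mp hφvθ, (hφw θ₀ θ' hWc).mp hθ₀⟩,
      (he θ θ' hW).mp heθ⟩
    exact (hΨ θ).mpr ⟨(hΨv θ θ' hW).mpr ((hΨ θ').mp hΨ').1, hΨwθ⟩
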